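/- arXiv:2211.04866 — 2 statements merged into one kernel-verified Lean document; each statement's English description precedes it below -/
import Mathlib

section
/- Let R be a ring with a submultiplicative map |·| : R → [0,∞) with |1| ≤ 1 and |fg| ≤ |f|·|g|. For 0 < p < ∞ define |f|_p = inf over all finite decompositions f = f₁ + ... + f_n of (∑ᵢ |fᵢ|^p)^(1/p) (with the empty sum giving |0|_p = 0). Then |·|_p is submultiplicative: |fg|_p ≤ |f|_p · |g|_p for all f, g ∈ R. -/
/-- The `ℓ^p`-regularized norm: infimum over all finite decompositions
`f = f₁ + ⋯ + f_n` of `(∑ᵢ ν(fᵢ)^p)^(1/p)`. -/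
noncomputable def pNorm {R : Type*} [Ring R] (ν : R → ℝ) (p : ℝ) (f : R) : ℝ :=
  sInf {r : ℝ | ∃ l : List R, l.sum = f ∧ ((l.map fun x => ν x ^ p).sum) ^ (1 / p) = r}

private lemma sum_flatMap' {α M : Type*} [AddMonoid M] (l : List α) (f : α → List M) :
    (l.flatMap f).sum = (l.map fun a => (f a).sum).sum := by
  induction l <;> simp [*]

private lemma sum_map_mul_left' {α M : Type*} [NonUnitalNonAssocSemiring M] (l : List α)
    (f : α → M) (r : M) : (l.map fun a => r * f a).sum = r * (l.map f).sum := by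
  induction l <;> simp [*, mul_add]

private lemma sum_map_mul_right' {α M : Type*} [NonUnitalNonAssocSemiring M] (l : List α)
    (f : α → M) (r : M) : (l.map fun a => f a * r).sum = (l.map f).sum * r := by
  induction l <;> simp [*, add_mul]

theorem stmt6 {R : Type*} [Ring R] (ν : R → ℝ) (p : ℝ) (hp : 0 < p)
    (hnonneg : ∀ x, 0 ≤ ν x) (hone : ν 1 ≤ 1)
    (hmul : ∀ f g, ν (f * g) ≤ ν f * ν g) :
    ∀ f g : R, pNorm ν p (f * g) ≤ pNorm ν p f * pNorm ν p g := by
  intro f g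
  set S : R → Set ℝ := fun h =>
    {r : ℝ | ∃ l : List R, l.sum = h ∧ ((l.map fun x => ν x ^ p).sum) ^ (1 / p) = r} with hSdef
  have hsum_nonneg : ∀ l : List R, (0:ℝ) ≤ (l.map fun x => ν x ^ p).sum := by
    intro l
    apply List.sum_nonneg
    rintro x hx
    obtain ⟨y, -, rfl⟩ := List.mem_map.1 hx
    exact Real.rpow_nonneg (hnonneg y) p
  have hmem_nonneg : ∀ h : R, ∀ r ∈ S h, (0:ℝ) ≤ r := by
    rintro h r ⟨l, -, rfl⟩
    exact Real.rpow_nonneg (hsum_nonneg l) _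
  have hbdd : ∀ h : R, BddBelow (S h) := fun h => ⟨0, fun r hr => hmem_nonneg h r hr⟩
  have hne : ∀ h : R, (S h).Nonempty := fun h => ⟨_, [h], by simp, rfl⟩
  have key : ∀ r ∈ S f, ∀ s ∈ S g, pNorm ν p (f * g) ≤ r * s := by
    rintro r ⟨l₁, h1, rfl⟩ s ⟨l₂, h2, rfl⟩
    set l : List R := l₁.flatMap (fun x => l₂.map (fun y => x * y)) with hl
    have hsum : l.sum = f * g := by
      rw [hl, sum_flatMap']
      have : ∀ x : R, (l₂.map fun y => x * y).sum = x * l₂.sum := fun x => by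
        simpa using sum_map_mul_left' l₂ id x
      simp only [this]
      rw [← h1, ← h2]
      simpa using sum_map_mul_right' l₁ id l₂.sum
    have hT : (l.map fun x => ν x ^ p).sum ≤
        ((l₁.map fun x => ν x ^ p).sum) * ((l₂.map fun x => ν x ^ p).sum) := by
      rw [hl, List.map_flatMap, sum_flatMap',
        ← sum_map_mul_right' l₁ (fun x => ν x ^ p) ((l₂.map fun x => ν x ^ p).sum)]
      apply List.sum_le_sum
      intro x hx
      rw [List.map_map, ← sum_map_mul_left' l₂ (fun y => ν y ^ p) (ν x ^ p)]
      apply List.sum_le_sum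
      intro y hy
      simp only [Function.comp]
      calc ν (x * y) ^ p ≤ (ν x * ν y) ^ p :=
            Real.rpow_le_rpow (hnonneg _) (hmul x y) hp.le
        _ = ν x ^ p * ν y ^ p := Real.mul_rpow (hnonneg x) (hnonneg y)
    have hmem : ((l.map fun x => ν x ^ p).sum) ^ (1 / p) ∈ S (f * g) := ⟨l, hsum, rfl⟩
    calc pNorm ν p (f * g) ≤ ((l.map fun x => ν x ^ p).sum) ^ (1 / p) :=
          csInf_le (hbdd _) hmem
      _ ≤ (((l₁.map fun x => ν x ^ p).sum) * ((l₂.map fun x => ν x ^ p).sum)) ^ (1 / p) :=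
          Real.rpow_le_rpow (hsum_nonneg l) hT (by positivity)
      _ = ((l₁.map fun x => ν x ^ p).sum) ^ (1 / p) * ((l₂.map fun x => ν x ^ p).sum) ^ (1 / p) :=
          Real.mul_rpow (hsum_nonneg l₁) (hsum_nonneg l₂)
  have h1 : ∀ s ∈ S g, pNorm ν p (f * g) ≤ sInf (S f) * s := by
    intro s hs
    rcases (hmem_nonneg g s hs).eq_or_lt with h0 | h0
    · obtain ⟨r, hr⟩ := hne f
      have h2 := key r hr s hs
      rw [← h0] at h2 ⊢
      simpa using h2
    · rw [← div_le_iff₀ h0]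
      exact le_csInf (hne f) fun r hr => (div_le_iff₀ h0).2 (key r hr s hs)
  have hA : 0 ≤ sInf (S f) := le_csInf (hne f) (hmem_nonneg f)
  show pNorm ν p (f * g) ≤ sInf (S f) * sInf (S g)
  rcases hA.eq_or_lt with h0 | h0
  · obtain ⟨s, hs⟩ := hne g
    have h2 := h1 s hs
    rw [← h0] at h2 ⊢
    simpa using h2
  · rw [mul_comm, ← div_le_iff₀ h0]
    exact le_csInf (hne g) fun s hs => (div_le_iff₀ h0).2 (by rw [mul_comm]; exact h1 s hs)
end

section
/- The completed tensor product of (ℤⁿ, ℓ^q-norm over (ℤ,|·|_∞)) with (ℤ_p, |·|_p) over (ℤ, |·|_∞) is isometrically isomorphic to (ℤ_pⁿ, ℓ^∞-norm): the projective-type tensor seminorm on ℤⁿ ⊗_ℤ ℤ_p ≅ ℤ_pⁿ equals the ℓ^∞-norm ‖(x₁,...,x_n)‖ = max_i |x_i|_p, for any q ∈ [1,∞). -/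
open scoped BigOperators

/-- The ℓ^q norm on ℤⁿ (with the archimedean absolute value). -/
noncomputable def zLqNorm (q : ℝ) {n : ℕ} (m : Fin n → ℤ) : ℝ :=
  (∑ j, |(m j : ℝ)| ^ q) ^ (1 / q)

/-- The projective-type tensor seminorm on `ℤⁿ ⊗_ℤ ℤ_p ≅ ℤ_pⁿ` (non-archimedean
constant-∞ case): infimum over presentations `x = ∑ᵢ mᵢ ⊗ fᵢ` of
`maxᵢ (‖mᵢ‖_q · |fᵢ|_p)`. -/
noncomputable def tensorSeminorm (p : ℕ) [Fact p.Prime] (q : ℝ) {n : ℕ}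
    (x : Fin (n + 1) → ℤ_[p]) : ℝ :=
  sInf {r : ℝ | ∃ (k : ℕ) (m : Fin (k + 1) → Fin (n + 1) → ℤ)
    (f : Fin (k + 1) → ℤ_[p]),
    (∀ j, x j = ∑ i, (m i j : ℤ_[p]) * f i) ∧
    r = Finset.univ.sup' Finset.univ_nonempty (fun i => zLqNorm q (m i) * ‖f i‖)}

lemma zLqNorm_diag (q : ℝ) (hq : 1 ≤ q) {n : ℕ} (i : Fin n) :
    zLqNorm q (fun j => if i = j then 1 else 0) = 1 := by
  have hq0 : q ≠ 0 := by linarith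
  unfold zLqNorm
  have : ∀ j : Fin n, |((if i = j then (1:ℤ) else 0 : ℤ) : ℝ)| ^ q
      = if i = j then 1 else 0 := by
    intro j
    by_cases h : i = j <;> simp [h, Real.zero_rpow hq0]
  rw [Finset.sum_congr rfl (fun j _ => this j)]
  simp

lemma one_le_zLqNorm (q : ℝ) (hq : 1 ≤ q) {n : ℕ} (m : Fin n → ℤ) (j : Fin n)
    (hmj : m j ≠ 0) : 1 ≤ zLqNorm q m := by
  have hq0 : 0 < q := by linarith
  have h1 : (1 : ℝ) ≤ |(m j : ℝ)| := by
    rw [← Int.cast_abs]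
    exact_mod_cast Int.one_le_abs hmj
  have h2 : (1 : ℝ) ≤ |(m j : ℝ)| ^ q := by
    calc (1:ℝ) = 1 ^ q := (Real.one_rpow q).symm
    _ ≤ |(m j : ℝ)| ^ q := Real.rpow_le_rpow (by norm_num) h1 hq0.le
  have h3 : (1 : ℝ) ≤ ∑ j', |(m j' : ℝ)| ^ q := by
    refine h2.trans (Finset.single_le_sum (f := fun j' => |(m j' : ℝ)| ^ q) (fun i _ => ?_) (Finset.mem_univ j))
    exact Real.rpow_nonneg (abs_nonneg _) q
  calc (1:ℝ) = 1 ^ (1/q) := (Real.one_rpow _).symm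
  _ ≤ (∑ j', |(m j' : ℝ)| ^ q) ^ (1/q) :=
      Real.rpow_le_rpow (by norm_num) h3 (by positivity)

theorem stmt10 (p : ℕ) [Fact p.Prime] (q : ℝ) (hq : 1 ≤ q) (n : ℕ)
    (x : Fin (n + 1) → ℤ_[p]) :
    tensorSeminorm p q x = Finset.univ.sup' Finset.univ_nonempty (fun i => ‖x i‖) := by
  set S := {r : ℝ | ∃ (k : ℕ) (m : Fin (k + 1) → Fin (n + 1) → ℤ)
    (f : Fin (k + 1) → ℤ_[p]),
    (∀ j, x j = ∑ i, (m i j : ℤ_[p]) * f i) ∧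
    r = Finset.univ.sup' Finset.univ_nonempty (fun i => zLqNorm q (m i) * ‖f i‖)} with hS
  have hmem : (Finset.univ.sup' Finset.univ_nonempty (fun i => ‖x i‖)) ∈ S := by
    refine ⟨n, fun i j => if i = j then 1 else 0, x, fun j => ?_, ?_⟩
    · rw [Finset.sum_eq_single j]
      · simp
      · intro b _ hb; simp [hb]
      · simp
    · refine Finset.sup'_congr _ rfl (fun i _ => ?_)
      rw [zLqNorm_diag q hq i, one_mul]
  have hlb : ∀ r ∈ S, Finset.univ.sup' Finset.univ_nonempty (fun i => ‖x i‖) ≤ r := by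
    rintro r ⟨k, m, f, hx, rfl⟩
    rw [Finset.sup'_le_iff]
    intro j _
    rw [hx j]
    refine (Finset.univ_nonempty.norm_sum_le_sup'_norm _).trans ?_
    rw [Finset.sup'_le_iff]
    intro i _
    refine Finset.le_sup'_of_le _ (Finset.mem_univ i) ?_
    rw [norm_mul]
    by_cases hm : m i j = 0
    · have h0 : (0:ℝ) ≤ zLqNorm q (m i) * ‖f i‖ := by
        apply mul_nonneg _ (norm_nonneg _)
        exact Real.rpow_nonneg (Finset.sum_nonneg fun _ _ => Real.rpow_nonneg (abs_nonneg _) q) _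
      simpa [hm] using h0
    · have h1 : ‖((m i j : ℤ_[p]))‖ ≤ 1 := PadicInt.norm_le_one _
      calc ‖((m i j : ℤ_[p]))‖ * ‖f i‖ ≤ 1 * ‖f i‖ :=
            mul_le_mul_of_nonneg_right h1 (norm_nonneg _)
      _ ≤ zLqNorm q (m i) * ‖f i‖ :=
            mul_le_mul_of_nonneg_right (one_le_zLqNorm q hq (m i) j hm) (norm_nonneg _)
  unfold tensorSeminorm
  rw [← hS]
  exact le_antisymm (csInf_le ⟨_, hlb⟩ hmem) (le_csInf ⟨_, hmem⟩ hlb)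
end
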